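/- arXiv:2509.25425 — 5 statements merged into one kernel-verified Lean document; each statement's English description precedes it below -/
import Mathlib

section
/- For all positive integers t and n, the matrix P_n satisfies P_n² = t · J_{t·4^n}. -/
open Matrix Kronecker

def Jmat (m l : ℕ) : Matrix (Fin m) (Fin l) ℤ := Matrix.of fun _ _ => 1
def Kmat (m : ℕ) : Matrix (Fin m) (Fin m) ℤ :=
  Matrix.of fun i j => if (j : ℕ) = m - 1 - (i : ℕ) then 1 else 0
def kron {m n p q : ℕ} (A : Matrix (Fin m) (Fin n) ℤ) (B : Matrix (Fin p) (Fin q) ℤ) :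
    Matrix (Fin (m * p)) (Fin (n * q)) ℤ :=
  Matrix.reindex finProdFinEquiv finProdFinEquiv (A ⊗ₖ B)
def castM {m n m' n' : ℕ} (hm : m = m') (hn : n = n') (A : Matrix (Fin m) (Fin n) ℤ) :
    Matrix (Fin m') (Fin n') ℤ :=
  Matrix.reindex (finCongr hm) (finCongr hn) A
def alphaM {m l : ℕ} (s : ℕ) (X : Matrix (Fin m) (Fin l) ℤ) :
    Matrix (Fin (m / s)) (Fin l) ℤ :=
  Matrix.of fun i j => X (Fin.castLE (Nat.div_le_self m s) i) j
def vstack {m₁ m₂ l : ℕ} (X : Matrix (Fin m₁) (Fin l) ℤ) (Y : Matrix (Fin m₂) (Fin l) ℤ) :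
    Matrix (Fin (m₁ + m₂)) (Fin l) ℤ :=
  Matrix.reindex finSumFinEquiv (Equiv.refl _) (Matrix.fromRows X Y)
def hstack {m l₁ l₂ : ℕ} (X : Matrix (Fin m) (Fin l₁) ℤ) (Y : Matrix (Fin m) (Fin l₂) ℤ) :
    Matrix (Fin m) (Fin (l₁ + l₂)) ℤ :=
  Matrix.reindex (Equiv.refl _) finSumFinEquiv (Matrix.fromCols X Y)
def block2 {a b c d : ℕ} (A : Matrix (Fin a) (Fin c) ℤ) (B : Matrix (Fin a) (Fin d) ℤ)
    (C : Matrix (Fin b) (Fin c) ℤ) (D : Matrix (Fin b) (Fin d) ℤ) :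
    Matrix (Fin (a + b)) (Fin (c + d)) ℤ :=
  Matrix.reindex finSumFinEquiv finSumFinEquiv (Matrix.fromBlocks A B C D)
lemma four_pow_eq (n : ℕ) : (4 : ℕ) ^ n = 2 ^ n * 2 ^ n := by
  rw [show (4 : ℕ) = 2 * 2 from rfl, mul_pow]
lemma t_four_pow_div (t n : ℕ) : t * 4 ^ n / 2 ^ n = t * 2 ^ n := by
  rw [four_pow_eq, ← mul_assoc, Nat.mul_div_cancel _ (by positivity)]
def vnum (v t n : ℕ) : ℕ := (v + (2 ^ (n + 1) - 4) * t) * 2 ^ (n - 1)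
lemma vnum_one (v t : ℕ) : vnum v t 1 = v := by norm_num [vnum]
lemma vnum_succ (v t n : ℕ) :
    vnum v t (n + 2) = 2 * vnum v t (n + 1) + 2 * (t * 4 ^ (n + 1)) := by
  unfold vnum
  simp only [show n + 2 + 1 = n + 3 from rfl, show n + 2 - 1 = n + 1 from rfl,
    show n + 1 + 1 = n + 2 from rfl, show n + 1 - 1 = n from rfl]
  have h2 : (4 : ℕ) ≤ 2 ^ (n + 2) := by
    calc (4 : ℕ) = 2 ^ 2 := rfl
    _ ≤ 2 ^ (n + 2) := Nat.pow_le_pow_right (by norm_num) (by omega)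
  have h3 : (4 : ℕ) ≤ 2 ^ (n + 3) := le_trans h2 (Nat.pow_le_pow_right (by norm_num) (by omega))
  rw [four_pow_eq]
  zify [h2, h3]
  ring
def Pmat (t n : ℕ) : Matrix (Fin (t * 4 ^ n)) (Fin (t * 4 ^ n)) ℤ :=
  castM (by rw [four_pow_eq]; ring) (by rw [four_pow_eq]; ring)
    (kron (kron (Jmat (2 ^ n) 1) (Kmat (2 ^ n))) (Jmat t (t * 2 ^ n)))
def Pone (t : ℕ) : Matrix (Fin (4 * t)) (Fin (4 * t)) ℤ :=
  castM (by ring) (by ring) (kron (kron (Jmat 2 1) (Kmat 2)) (Jmat t (2 * t)))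

/-- The recursively defined sequence `P'_n` of Lemma 2. -/
def P'mat (t : ℕ) : (n : ℕ) → Matrix (Fin (t * 4 ^ n)) (Fin (t * 4 ^ n)) ℤ
  | 0 => 0
  | 1 => castM (by ring) (by ring) (kron (kron (Jmat 2 1) (Kmat 2)) (Jmat t (2 * t)))
  | (n + 2) =>
      castM
        (by rw [t_four_pow_div, four_pow_eq]; ring)
        (by ring)
        (kron (kron (kron (Jmat (2 ^ (n + 2)) 1) (Kmat 2))
          (alphaM (2 ^ (n + 1)) (P'mat t (n + 1)))) (Jmat 1 2))

/-- The recursively defined sequence `B_n` (with `B_1` given). -/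
def Bmat (t v : ℕ) (B₁ : Matrix (Fin v) (Fin (4 * t)) ℤ) :
    (n : ℕ) → Matrix (Fin (vnum v t n)) (Fin (t * 4 ^ n)) ℤ
  | 0 => 0
  | 1 => castM (vnum_one v t).symm (by ring) B₁
  | (n + 2) =>
      castM (by rw [vnum_succ]; try ring) (by ring)
        (vstack (kron (kron (Kmat 2) (Bmat t v B₁ (n + 1))) (Jmat 1 2))
          (kron (kron (1 : Matrix (Fin 2) (Fin 2) ℤ) (Pmat t (n + 1))) (Jmat 1 2)))

/-- The recursively defined sequence `C_n` (with `C_1` given). -/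
def Cmat (t v : ℕ) (C₁ : Matrix (Fin (4 * t)) (Fin v) ℤ) :
    (n : ℕ) → Matrix (Fin (t * 4 ^ n)) (Fin (vnum v t n)) ℤ
  | 0 => 0
  | 1 => castM (by ring) (vnum_one v t).symm C₁
  | (n + 2) =>
      castM (by rw [t_four_pow_div, four_pow_eq]; ring) (by rw [vnum_succ]; try ring)
        (hstack
          (kron (kron (Jmat (2 ^ (n + 2)) 1) (1 : Matrix (Fin 2) (Fin 2) ℤ))
            (alphaM (2 ^ (n + 1)) (Cmat t v C₁ (n + 1))))
          (kron (kron (Jmat (2 ^ (n + 2)) 1) (1 : Matrix (Fin 2) (Fin 2) ℤ))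
            (alphaM (2 ^ (n + 1)) (Pmat t (n + 1)))))

/-- The recursively defined sequence `A_n` (with `A_1`, `B_1`, `C_1` given). -/
def Amat (t v : ℕ) (A₁ : Matrix (Fin v) (Fin v) ℤ) (B₁ : Matrix (Fin v) (Fin (4 * t)) ℤ)
    (C₁ : Matrix (Fin (4 * t)) (Fin v) ℤ) :
    (n : ℕ) → Matrix (Fin (vnum v t n)) (Fin (vnum v t n)) ℤ
  | 0 => 0
  | 1 => castM (vnum_one v t).symm (vnum_one v t).symm A₁
  | (n + 2) =>
      castM (by rw [vnum_succ]) (by rw [vnum_succ])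
        (block2 (kron (1 : Matrix (Fin 2) (Fin 2) ℤ) (Amat t v A₁ B₁ C₁ (n + 1)))
          (kron (1 : Matrix (Fin 2) (Fin 2) ℤ) (Bmat t v B₁ (n + 1)))
          (kron (Kmat 2) (Cmat t v C₁ (n + 1)))
          (kron (Kmat 2) (Pmat t (n + 1))))


lemma Pmat_apply (t n : ℕ) (i j : Fin (t * 4 ^ n)) :
    Pmat t n i j =
      if ((j : ℕ) / (t * 2 ^ n)) % 2 ^ n = 2 ^ n - 1 - (((i : ℕ) / t) % 2 ^ n) then 1 else 0 := by
  simp [Pmat, castM, kron, Jmat, Kmat, Matrix.reindex_apply, Matrix.submatrix_apply,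
    Matrix.kroneckerMap_apply, Fin.coe_divNat, Fin.coe_modNat]
  congr 1

/-- Lemma 1(2): `P_n² = t · J`. -/
theorem Pmat_sq (t n : ℕ) (ht : 0 < t) (hn : 1 ≤ n) :
    Pmat t n * Pmat t n = (t : ℤ) • Jmat (t * 4 ^ n) (t * 4 ^ n) := by
  have hm : 0 < 2 ^ n := Nat.pow_pos (by norm_num)
  ext i j
  rw [Matrix.mul_apply]
  simp only [Pmat_apply]
  have hrhs : ((t:ℤ) • Jmat (t * 4 ^ n) (t * 4 ^ n)) i j = t := by simp [Jmat]
  rw [hrhs]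
  set M := 2 ^ n with hM
  set x := ((i : ℕ) / t) % M with hx
  set y := ((j : ℕ) / (t * M)) % M with hy
  have hyM : y < M := Nat.mod_lt _ hm
  let e : Fin M × (Fin M × Fin t) ≃ Fin (t * 4 ^ n) :=
    ((Equiv.refl (Fin M)).prodCongr finProdFinEquiv).trans
      (finProdFinEquiv.trans (finCongr (by rw [four_pow_eq]; ring)))
  rw [← Equiv.sum_comp e]
  have he : ∀ (a b : Fin M) (c : Fin t),
      ((e (a, (b, c)) : ℕ)) = ((c : ℕ) + t * b) + (M * t) * a := fun _ _ _ => rfl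
  have h1 : ∀ (a b : Fin M) (c : Fin t),
      (((c : ℕ) + t * b) + (M * t) * a) / (t * M) % M = a := by
    intro a b c
    have hc : (c : ℕ) + t * b < t * M := by
      have := c.isLt; have := b.isLt
      calc (c : ℕ) + t * b < t * b + t := by omega
      _ = t * ((b : ℕ) + 1) := (Nat.mul_succ t _).symm
      _ ≤ t * M := Nat.mul_le_mul_left _ b.isLt
    rw [show M * t = t * M from Nat.mul_comm _ _,
      Nat.add_mul_div_left _ _ (Nat.mul_pos ht hm), Nat.div_eq_of_lt hc, Nat.zero_add,
      Nat.mod_eq_of_lt a.isLt]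
  have h2 : ∀ (a b : Fin M) (c : Fin t),
      (((c : ℕ) + t * b) + (M * t) * a) / t % M = b := by
    intro a b c
    rw [show ((c : ℕ) + t * b) + (M * t) * a = (c : ℕ) + t * ((b : ℕ) + M * a) by ring,
      Nat.add_mul_div_left _ _ ht, Nat.div_eq_of_lt c.isLt, Nat.zero_add,
      Nat.add_mul_mod_self_left, Nat.mod_eq_of_lt b.isLt]
  simp only [Fintype.sum_prod_type]
  have hxa : M - 1 - x < M := by omega
  have hyb : M - 1 - y < M := by omega
  have hA : ∀ a : Fin M, ((a : ℕ) = M - 1 - x) ↔ a = ⟨M - 1 - x, hxa⟩ := by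
    intro a; rw [Fin.eq_mk_iff_val_eq]
  have hB : ∀ b : Fin M, (y = M - 1 - (b : ℕ)) ↔ b = ⟨M - 1 - y, hyb⟩ := by
    intro b; rw [Fin.eq_mk_iff_val_eq]; have := b.isLt; constructor <;> intro h <;> omega
  calc ∑ a : Fin M, ∑ b : Fin M, ∑ c : Fin t,
        ((if ((e (a, (b, c)) : ℕ) / (t * M)) % M = M - 1 - x then (1:ℤ) else 0) *
          (if y = M - 1 - ((e (a, (b, c)) : ℕ) / t % M) then 1 else 0))
      = ∑ a : Fin M, ∑ b : Fin M, ∑ _c : Fin t,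
        ((if a = ⟨M - 1 - x, hxa⟩ then (1:ℤ) else 0) *
          (if b = ⟨M - 1 - y, hyb⟩ then 1 else 0)) := by
        refine Finset.sum_congr rfl fun a _ => Finset.sum_congr rfl fun b _ =>
          Finset.sum_congr rfl fun c _ => ?_
        rw [he, h1, h2]; simp only [hA, hB]
    _ = t := by
        simp [Finset.sum_const, Finset.sum_ite_eq', mul_comm]
end

section
/- For every n ≥ 1, each row of the matrix B_n contains exactly t·2^n ones; equivalently, B_n · J_{t·4^n} = t·2^n · J (of the appropriate rectangular size). -/
open Matrix Kronecker

def RS {m l : ℕ} (X : Matrix (Fin m) (Fin l) ℤ) (c : ℤ) : Prop :=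
  ∀ i, ∑ j, X i j = c

lemma RS_Jmat (m l : ℕ) : RS (Jmat m l) l := by
  intro i; simp [Jmat]

lemma RS_Kmat {m : ℕ} (hm : 0 < m) : RS (Kmat m) 1 := by
  intro i
  have h : m - 1 - (i : ℕ) < m := by omega
  have key : ∀ j : Fin m, ((j : ℕ) = m - 1 - (i : ℕ)) ↔ j = ⟨m - 1 - (i : ℕ), h⟩ := by
    intro j; simp [Fin.ext_iff]
  simp [Kmat, key]

lemma RS_one : RS (1 : Matrix (Fin 2) (Fin 2) ℤ) 1 := by
  intro i; simp [Matrix.one_apply]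

lemma RS_kron {m n p q : ℕ} {A : Matrix (Fin m) (Fin n) ℤ} {B : Matrix (Fin p) (Fin q) ℤ}
    {a b : ℤ} (hA : RS A a) (hB : RS B b) : RS (kron A B) (a * b) := by
  intro i
  unfold kron
  simp only [Matrix.reindex_apply, Matrix.submatrix_apply, Equiv.refl_symm]
  rw [← Equiv.sum_comp (finProdFinEquiv : Fin n × Fin q ≃ Fin (n * q)).symm.symm
    (fun j => (A ⊗ₖ B) (finProdFinEquiv.symm i) (finProdFinEquiv.symm j))]
  simp only [Equiv.symm_symm, Equiv.symm_apply_apply]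
  obtain ⟨i1, i2⟩ := finProdFinEquiv.symm i
  rw [Fintype.sum_prod_type]
  simp only [Matrix.kroneckerMap_apply]
  rw [← Finset.sum_mul_sum, hA, hB]

lemma RS_castM {m n m' n' : ℕ} (hm : m = m') (hn : n = n')
    {A : Matrix (Fin m) (Fin n) ℤ} {c : ℤ} (hA : RS A c) : RS (castM hm hn A) c := by
  intro i
  unfold castM
  simp only [Matrix.reindex_apply, Matrix.submatrix_apply]
  rw [← Equiv.sum_comp (finCongr hn : Fin n ≃ Fin n').symm.symm
    (fun j => A ((finCongr hm).symm i) ((finCongr hn).symm j))]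
  simp only [Equiv.symm_symm, Equiv.symm_apply_apply]
  exact hA _

lemma RS_vstack {m₁ m₂ l : ℕ} {X : Matrix (Fin m₁) (Fin l) ℤ} {Y : Matrix (Fin m₂) (Fin l) ℤ}
    {c : ℤ} (hX : RS X c) (hY : RS Y c) : RS (vstack X Y) c := by
  intro i
  unfold vstack
  simp only [Matrix.reindex_apply, Matrix.submatrix_apply, Equiv.refl_symm, Equiv.refl_apply]
  rcases finSumFinEquiv.symm i with i' | i'
  · simpa [Matrix.fromRows_apply_inl] using hX i'
  · simpa [Matrix.fromRows_apply_inr] using hY i'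

lemma RS_Pmat (t : ℕ) (n : ℕ) : RS (Pmat t (n + 1)) (t * 2 ^ (n + 1)) := by
  unfold Pmat
  apply RS_castM
  have := RS_kron (RS_kron (RS_Jmat (2 ^ (n + 1)) 1) (RS_Kmat (m := 2 ^ (n+1)) (Nat.pow_pos (by norm_num))))
    (RS_Jmat t (t * 2 ^ (n + 1)))
  convert this using 1
  push_cast; ring

lemma RS_Bmat (t v : ℕ) (B₁ : Matrix (Fin v) (Fin (4 * t)) ℤ)
    (hB : RS B₁ (2 * t)) (n : ℕ) : RS (Bmat t v B₁ (n + 1)) (t * 2 ^ (n + 1)) := by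
  induction n with
  | zero =>
    show RS (Bmat t v B₁ 1) _
    simp only [Bmat]
    apply RS_castM
    convert hB using 1; push_cast; ring
  | succ n ih =>
    show RS (Bmat t v B₁ (n + 2)) _
    simp only [Bmat]
    apply RS_castM
    apply RS_vstack
    · have := RS_kron (RS_kron (RS_Kmat (by norm_num : (0:ℕ) < 2)) ih) (RS_Jmat 1 2)
      convert this using 1; push_cast; ring
    · have := RS_kron (RS_kron RS_one (RS_Pmat t n)) (RS_Jmat 1 2)
      convert this using 1; push_cast; ring

/-- Lemma 3(1): each row of `B_n` contains exactly `t·2^n` ones. -/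
theorem Bmat_row_sum
    (t v k : ℕ) (ht : 0 < t) (hv : 0 < v) (hk : 0 < k)
    (B₁ : Matrix (Fin v) (Fin (4 * t)) ℤ) (C₁ : Matrix (Fin (4 * t)) (Fin v) ℤ)
    (hB01 : ∀ i j, B₁ i j = 0 ∨ B₁ i j = 1) (hC01 : ∀ i j, C₁ i j = 0 ∨ C₁ i j = 1)
    (hBJ : B₁ * Jmat (4 * t) (4 * t) = (2 * (t : ℤ)) • Jmat v (4 * t))
    (hJB : Jmat v v * B₁ = (k : ℤ) • Jmat v (4 * t))
    (hCJ : C₁ * Jmat v v = (k : ℤ) • Jmat (4 * t) v)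
    (hJC : Jmat (4 * t) (4 * t) * C₁ = (2 * (t : ℤ)) • Jmat (4 * t) v)
    (n : ℕ) (hn : 1 ≤ n) :
    Bmat t v B₁ n * Jmat (t * 4 ^ n) (t * 4 ^ n) =
      ((t : ℤ) * 2 ^ n) • Jmat (vnum v t n) (t * 4 ^ n) := by
  obtain ⟨m, rfl⟩ : ∃ m, n = m + 1 := ⟨n - 1, by omega⟩
  have hRS := RS_Bmat t v B₁ (by
    intro i
    have := congrFun (congrFun hBJ i) ⟨0, by positivity⟩
    simpa [Matrix.mul_apply, Jmat, mul_comm] using this) m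
  ext i j
  simp only [Matrix.mul_apply, Jmat, Matrix.smul_apply, Matrix.of_apply, smul_eq_mul, mul_one]
  exact hRS i
end

section
/- For every n ≥ 1, each column of the matrix B_n contains exactly k + (2^n − 2)·t ones; equivalently, J · B_n = (k + (2^n − 2)t) · J (of the appropriate rectangular sizes). -/
open Matrix Kronecker

def csum {m l : ℕ} (X : Matrix (Fin m) (Fin l) ℤ) (c : ℤ) : Prop :=
  ∀ j, ∑ i, X i j = c

lemma csum_kron {m n p q : ℕ} {A : Matrix (Fin m) (Fin n) ℤ} {B : Matrix (Fin p) (Fin q) ℤ}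
    {a b : ℤ} (hA : csum A a) (hB : csum B b) : csum (kron A B) (a * b) := by
  intro j
  unfold kron
  simp only [Matrix.reindex_apply, Matrix.submatrix_apply]
  rw [← Equiv.sum_comp finProdFinEquiv (fun i => (A ⊗ₖ B) (finProdFinEquiv.symm i)
    (finProdFinEquiv.symm j))]
  simp only [Equiv.symm_apply_apply]
  obtain ⟨j₁, j₂⟩ := finProdFinEquiv.symm j
  rw [Fintype.sum_prod_type]
  simp only [Matrix.kroneckerMap_apply]
  rw [← Finset.sum_mul_sum]
  rw [hA j₁, hB j₂]

lemma csum_cast {m n m' n' : ℕ} (hm : m = m') (hn : n = n')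
    {X : Matrix (Fin m) (Fin n) ℤ} {c : ℤ} (hX : csum X c) : csum (castM hm hn X) c := by
  intro j
  unfold castM
  simp only [Matrix.reindex_apply, Matrix.submatrix_apply]
  rw [← Equiv.sum_comp (finCongr hm) (fun i => X ((finCongr hm).symm i) ((finCongr hn).symm j))]
  simp only [Equiv.symm_apply_apply]
  exact hX _

lemma csum_vstack {m₁ m₂ l : ℕ} {X : Matrix (Fin m₁) (Fin l) ℤ} {Y : Matrix (Fin m₂) (Fin l) ℤ}
    {a b : ℤ} (hX : csum X a) (hY : csum Y b) : csum (vstack X Y) (a + b) := by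
  intro j
  unfold vstack
  simp only [Matrix.reindex_apply, Matrix.submatrix_apply, Equiv.refl_symm, Equiv.refl_apply]
  rw [← Equiv.sum_comp finSumFinEquiv
    (fun i => Matrix.fromRows X Y (finSumFinEquiv.symm i) j)]
  simp only [Equiv.symm_apply_apply]
  rw [Fintype.sum_sum_type]
  simp only [Matrix.fromRows_apply_inl, Matrix.fromRows_apply_inr]
  rw [hX j, hY j]

lemma csum_Jmat (m l : ℕ) : csum (Jmat m l) (m : ℤ) := by
  intro j; simp [Jmat]

lemma csum_Kmat {m : ℕ} (hm : 0 < m) : csum (Kmat m) 1 := by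
  intro j
  have key : ∀ i : Fin m, Kmat m i j
      = if i = (⟨m - 1 - (j : ℕ), by omega⟩ : Fin m) then 1 else 0 := by
    intro i
    have hi := i.isLt
    have hj := j.isLt
    simp only [Kmat, Matrix.of_apply]
    by_cases h : (j : ℕ) = m - 1 - (i : ℕ)
    · rw [if_pos h, if_pos (Fin.ext (by simp only [Fin.val_mk]; omega))]
    · rw [if_neg h, if_neg (fun he => h (by rw [he]; simp only [Fin.val_mk]; omega))]
  simp only [key]
  rw [Finset.sum_ite_eq' Finset.univ, if_pos (Finset.mem_univ _)]

lemma csum_one2 : csum (1 : Matrix (Fin 2) (Fin 2) ℤ) 1 := by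
  intro j
  rw [Fin.sum_univ_two]
  fin_cases j <;> simp [Matrix.one_apply]

lemma csum_Pmat (t : ℕ) (ht : 0 < t) (n : ℕ) :
    csum (Pmat t n) ((2 : ℤ) ^ n * t) := by
  have h := csum_kron (csum_kron (csum_Jmat (2 ^ n) 1) (csum_Kmat (m := 2 ^ n) (by positivity)))
    (csum_Jmat t (t * 2 ^ n))
  have h2 : ((2 ^ n : ℕ) : ℤ) * 1 * (t : ℤ) = (2 : ℤ) ^ n * t := by push_cast; ring
  rw [h2] at h
  exact csum_cast _ _ h

lemma csum_smul_J {m l : ℕ} (hm : 0 < m) {X : Matrix (Fin m) (Fin l) ℤ} {c : ℤ}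
    (h : Jmat m m * X = c • Jmat m l) : csum X c := by
  intro j
  have := congrFun (congrFun h ⟨0, hm⟩) j
  simpa [Matrix.mul_apply, Jmat] using this

lemma csum_congr {m l : ℕ} {X : Matrix (Fin m) (Fin l) ℤ} {a b : ℤ}
    (h : csum X a) (e : a = b) : csum X b := e ▸ h

lemma csum_Bmat (t v k : ℕ) (ht : 0 < t) (hv : 0 < v)
    (B₁ : Matrix (Fin v) (Fin (4 * t)) ℤ)
    (hJB : Jmat v v * B₁ = (k : ℤ) • Jmat v (4 * t)) :
    ∀ n : ℕ, csum (Bmat t v B₁ (n + 1)) ((k : ℤ) + ((2 : ℤ) ^ (n + 1) - 2) * t) := by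
  intro n
  induction n with
  | zero =>
      have hB : csum B₁ (k : ℤ) := csum_smul_J hv hJB
      have h : csum (Bmat t v B₁ 1) (k : ℤ) := csum_cast _ _ hB
      exact csum_congr h (by push_cast; ring)
  | succ n ih =>
      show csum (Bmat t v B₁ (n + 2)) _
      have h1 := csum_kron (csum_kron (csum_Kmat (m := 2) (by norm_num)) ih) (csum_Jmat 1 2)
      have h2 := csum_kron (csum_kron csum_one2 (csum_Pmat t ht (n + 1))) (csum_Jmat 1 2)
      have h := csum_vstack h1 h2
      have heq : 1 * ((k : ℤ) + ((2:ℤ) ^ (n + 1) - 2) * t) * 1 +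
          1 * ((2:ℤ) ^ (n + 1) * t) * 1 * 1 =
          (k : ℤ) + ((2:ℤ) ^ (n + 2) - 2) * t := by push_cast; ring
      exact csum_congr (csum_cast _ _ h) (by push_cast; ring)

/-- Lemma 3(2): each column of `B_n` contains exactly `k + (2^n − 2)t` ones. -/
theorem Bmat_col_sum
    (t v k : ℕ) (ht : 0 < t) (hv : 0 < v) (hk : 0 < k)
    (B₁ : Matrix (Fin v) (Fin (4 * t)) ℤ) (C₁ : Matrix (Fin (4 * t)) (Fin v) ℤ)
    (hB01 : ∀ i j, B₁ i j = 0 ∨ B₁ i j = 1) (hC01 : ∀ i j, C₁ i j = 0 ∨ C₁ i j = 1)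
    (hBJ : B₁ * Jmat (4 * t) (4 * t) = (2 * (t : ℤ)) • Jmat v (4 * t))
    (hJB : Jmat v v * B₁ = (k : ℤ) • Jmat v (4 * t))
    (hCJ : C₁ * Jmat v v = (k : ℤ) • Jmat (4 * t) v)
    (hJC : Jmat (4 * t) (4 * t) * C₁ = (2 * (t : ℤ)) • Jmat (4 * t) v)
    (n : ℕ) (hn : 1 ≤ n) :
    Jmat (vnum v t n) (vnum v t n) * Bmat t v B₁ n =
      ((k : ℤ) + ((2 : ℤ) ^ n - 2) * t) • Jmat (vnum v t n) (t * 4 ^ n) := by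
  obtain ⟨m, rfl⟩ : ∃ m, n = m + 1 := ⟨n - 1, by omega⟩
  have hc := csum_Bmat t v k ht hv B₁ hJB m
  ext i j
  simp only [Matrix.mul_apply, Jmat, Matrix.of_apply, one_mul, Matrix.smul_apply,
    smul_eq_mul, mul_one]
  exact hc j
end

section
/- For every n ≥ 1, each row of the matrix C_n contains exactly k + (2^n − 2)·t ones; equivalently, C_n · J = (k + (2^n − 2)t) · J (of the appropriate rectangular sizes). -/
open Matrix Kronecker

section RowSumHelpers

open Finset

lemma rowsum_castM {m n m' n' : ℕ} (hm : m = m') (hn : n = n')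
    (A : Matrix (Fin m) (Fin n) ℤ) (c : ℤ) (h : ∀ i, ∑ j, A i j = c) :
    ∀ i, ∑ j, castM hm hn A i j = c := by
  intro i
  rw [show (∑ j, castM hm hn A i j)
      = ∑ j : Fin n, A ((finCongr hm).symm i) j from
    Fintype.sum_equiv (finCongr hn).symm _ _ (fun j => rfl)]
  exact h _

lemma rowsum_kron {m n p q : ℕ} (A : Matrix (Fin m) (Fin n) ℤ)
    (B : Matrix (Fin p) (Fin q) ℤ) (a b : ℤ)
    (hA : ∀ i, ∑ j, A i j = a) (hB : ∀ i, ∑ j, B i j = b) :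
    ∀ i, ∑ j, kron A B i j = a * b := by
  intro i
  rw [show (∑ j, kron A B i j)
      = ∑ j : Fin n × Fin q, (A ⊗ₖ B) (finProdFinEquiv.symm i) j from
    Fintype.sum_equiv finProdFinEquiv.symm _ _ (fun j => rfl)]
  simp only [Fintype.sum_prod_type, Matrix.kroneckerMap_apply, ← Finset.mul_sum, hB,
    ← Finset.sum_mul, hA]

lemma rowsum_hstack {m l₁ l₂ : ℕ} (X : Matrix (Fin m) (Fin l₁) ℤ)
    (Y : Matrix (Fin m) (Fin l₂) ℤ) (x y : ℤ)
    (hX : ∀ i, ∑ j, X i j = x) (hY : ∀ i, ∑ j, Y i j = y) :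
    ∀ i, ∑ j, hstack X Y i j = x + y := by
  intro i
  rw [show (∑ j, hstack X Y i j)
      = ∑ j : Fin l₁ ⊕ Fin l₂, Matrix.fromCols X Y i j from
    Fintype.sum_equiv finSumFinEquiv.symm _ _ (fun j => rfl)]
  simp [Matrix.fromCols, hX, hY]

lemma rowsum_alphaM {m l : ℕ} (s : ℕ) (X : Matrix (Fin m) (Fin l) ℤ) (c : ℤ)
    (h : ∀ i, ∑ j, X i j = c) : ∀ i, ∑ j, alphaM s X i j = c := by
  intro i; exact h _

lemma rowsum_Jmat (m l : ℕ) : ∀ i : Fin m, ∑ j, Jmat m l i j = (l : ℤ) := by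
  intro i; simp [Jmat]

lemma rowsum_Kmat (m : ℕ) (hm : 0 < m) : ∀ i : Fin m, ∑ j, Kmat m i j = 1 := by
  intro i
  have hlt : m - 1 - (i : ℕ) < m := by omega
  rw [show (∑ j, Kmat m i j)
      = ∑ j : Fin m, if j = (⟨m - 1 - (i : ℕ), hlt⟩ : Fin m) then 1 else 0 from
    Finset.sum_congr rfl (fun j _ => by simp [Kmat, Fin.ext_iff])]
  simp

lemma rowsum_one2 : ∀ i : Fin 2, ∑ j, (1 : Matrix (Fin 2) (Fin 2) ℤ) i j = 1 := by
  decide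

lemma rowsum_Pmat (t n : ℕ) (hn : 1 ≤ n) :
    ∀ i, ∑ j, Pmat t n i j = ((t * 2 ^ n : ℕ) : ℤ) := by
  intro i
  unfold Pmat
  rw [rowsum_castM _ _ _ (((1 : ℕ) : ℤ) * 1 * ((t * 2 ^ n : ℕ) : ℤ))
    (rowsum_kron _ _ _ _
      (rowsum_kron _ _ _ _ (rowsum_Jmat _ _) (rowsum_Kmat _ (by positivity)))
      (rowsum_Jmat _ _))]
  push_cast; ring

lemma rowsum_Cmat (t v k : ℕ) (ht : 0 < t) (hv : 0 < v)
    (C₁ : Matrix (Fin (4 * t)) (Fin v) ℤ)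
    (hCJ : C₁ * Jmat v v = (k : ℤ) • Jmat (4 * t) v) :
    ∀ n, ∀ i, ∑ j, Cmat t v C₁ (n + 1) i j = (k : ℤ) + ((2 : ℤ) ^ (n + 1) - 2) * t := by
  have hC : ∀ i, ∑ j, C₁ i j = (k : ℤ) := by
    intro i
    have := congrFun (congrFun hCJ i) ⟨0, hv⟩
    simpa [Matrix.mul_apply, Jmat] using this
  intro n
  induction n with
  | zero =>
    intro i
    show (∑ j, castM (by ring) (vnum_one v t).symm C₁ i j) = _
    rw [rowsum_castM _ _ _ _ hC]
    push_cast; ring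
  | succ n ih =>
    intro i
    show (∑ j, castM _ _ (hstack
          (kron (kron (Jmat (2 ^ (n + 2)) 1) (1 : Matrix (Fin 2) (Fin 2) ℤ))
            (alphaM (2 ^ (n + 1)) (Cmat t v C₁ (n + 1))))
          (kron (kron (Jmat (2 ^ (n + 2)) 1) (1 : Matrix (Fin 2) (Fin 2) ℤ))
            (alphaM (2 ^ (n + 1)) (Pmat t (n + 1))))) i j) = _
    rw [rowsum_castM _ _ _ (((1 : ℤ) * 1) * ((k : ℤ) + ((2 : ℤ) ^ (n + 1) - 2) * t)
        + ((1 : ℤ) * 1) * ((t * 2 ^ (n + 1) : ℕ) : ℤ))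
      (rowsum_hstack _ _ _ _
        (rowsum_kron _ _ _ _
          (rowsum_kron _ _ _ _ (rowsum_Jmat _ _) rowsum_one2)
          (rowsum_alphaM _ _ _ ih))
        (rowsum_kron _ _ _ _
          (rowsum_kron _ _ _ _ (rowsum_Jmat _ _) rowsum_one2)
          (rowsum_alphaM _ _ _ (rowsum_Pmat t (n + 1) (by omega)))))]
    push_cast; ring

end RowSumHelpers

/-- Lemma 3(3): each row of `C_n` contains exactly `k + (2^n − 2)t` ones. -/
theorem Cmat_row_sum
    (t v k : ℕ) (ht : 0 < t) (hv : 0 < v) (hk : 0 < k)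
    (B₁ : Matrix (Fin v) (Fin (4 * t)) ℤ) (C₁ : Matrix (Fin (4 * t)) (Fin v) ℤ)
    (hB01 : ∀ i j, B₁ i j = 0 ∨ B₁ i j = 1) (hC01 : ∀ i j, C₁ i j = 0 ∨ C₁ i j = 1)
    (hBJ : B₁ * Jmat (4 * t) (4 * t) = (2 * (t : ℤ)) • Jmat v (4 * t))
    (hJB : Jmat v v * B₁ = (k : ℤ) • Jmat v (4 * t))
    (hCJ : C₁ * Jmat v v = (k : ℤ) • Jmat (4 * t) v)
    (hJC : Jmat (4 * t) (4 * t) * C₁ = (2 * (t : ℤ)) • Jmat (4 * t) v)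
    (n : ℕ) (hn : 1 ≤ n) :
    Cmat t v C₁ n * Jmat (vnum v t n) (vnum v t n) =
      ((k : ℤ) + ((2 : ℤ) ^ n - 2) * t) • Jmat (t * 4 ^ n) (vnum v t n) := by
  obtain ⟨m, rfl⟩ : ∃ m, n = m + 1 := ⟨n - 1, by omega⟩
  ext i j
  have h := rowsum_Cmat t v k ht hv C₁ hCJ m i
  simpa [Matrix.mul_apply, Jmat] using h
end

section
/- For every n ≥ 1, B_n · P_n = t · J_{v_n, t·4^n}, where v_n := (v+(2^{n+1}−4)t)·2^{n−1}. -/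
open Matrix Kronecker

namespace BP

/-- Total entry function: out-of-range indices give 0. -/
def E {r c : ℕ} (B : Matrix (Fin r) (Fin c) ℤ) (i j : ℕ) : ℤ :=
  if h : i < r ∧ j < c then B ⟨i, h.1⟩ ⟨j, h.2⟩ else 0

lemma E_apply {r c : ℕ} (B : Matrix (Fin r) (Fin c) ℤ) (i : Fin r) (j : Fin c) :
    E B i j = B i j := by
  simp [E, i.isLt, j.isLt]

lemma E_castM {m n m' n' : ℕ} (hm : m = m') (hn : n = n')
    (A : Matrix (Fin m) (Fin n) ℤ) (i j : ℕ) :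
    E (castM hm hn A) i j = E A i j := by
  subst hm; subst hn
  simp [castM, E]

lemma E_kron {m n p q : ℕ} (A : Matrix (Fin m) (Fin n) ℤ) (B : Matrix (Fin p) (Fin q) ℤ)
    {x y : ℕ} (hx : x < m * p) (hy : y < n * q) :
    E (kron A B) x y = E A (x / p) (y / q) * E B (x % p) (y % q) := by
  have hp : 0 < p := by by_contra h; push_neg at h; interval_cases p <;> omega
  have hq : 0 < q := by by_contra h; push_neg at h; interval_cases q <;> omega
  have hx1 : x / p < m := Nat.div_lt_of_lt_mul (by rwa [mul_comm] at hx)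
  have hy1 : y / q < n := Nat.div_lt_of_lt_mul (by rwa [mul_comm] at hy)
  have hx2 : x % p < p := Nat.mod_lt _ hp
  have hy2 : y % q < q := Nat.mod_lt _ hq
  rw [E, dif_pos ⟨hx, hy⟩, E, dif_pos ⟨hx1, hy1⟩, E, dif_pos ⟨hx2, hy2⟩]
  rfl

lemma E_Jmat (m l i j : ℕ) : E (Jmat m l) i j = if i < m ∧ j < l then 1 else 0 := by
  unfold E Jmat; split_ifs <;> simp_all

lemma E_Kmat (m i j : ℕ) :
    E (Kmat m) i j = if i < m ∧ j < m ∧ j = m - 1 - i then 1 else 0 := by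
  unfold E Kmat
  split_ifs <;> simp_all <;> omega

lemma E_one2 (i j : ℕ) :
    E (1 : Matrix (Fin 2) (Fin 2) ℤ) i j = if i < 2 ∧ j < 2 ∧ i = j then 1 else 0 := by
  unfold E
  split_ifs with h h2 h3 <;> try rfl
  · rw [Matrix.one_apply, if_pos (by exact Fin.ext h2.2.2)]
  · rw [Matrix.one_apply, if_neg (by intro hc; exact h2 ⟨h.1, h.2, congrArg Fin.val hc⟩)]
  · omega

lemma E_vstack {m₁ m₂ l : ℕ} (X : Matrix (Fin m₁) (Fin l) ℤ) (Y : Matrix (Fin m₂) (Fin l) ℤ)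
    (r y : ℕ) :
    E (vstack X Y) r y = if r < m₁ then E X r y else E Y (r - m₁) y := by
  by_cases hy : y < l
  · by_cases h1 : r < m₁
    · have hr : r < m₁ + m₂ := by omega
      rw [if_pos h1, E, dif_pos ⟨hr, hy⟩, E, dif_pos ⟨h1, hy⟩]
      show vstack X Y ⟨r, hr⟩ ⟨y, hy⟩ = _
      unfold vstack
      have hs : (finSumFinEquiv.symm ⟨r, hr⟩ : Fin m₁ ⊕ Fin m₂) = Sum.inl ⟨r, h1⟩ := by
        rw [Equiv.symm_apply_eq, finSumFinEquiv_apply_left]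
        rfl
      rw [Matrix.reindex_apply, Matrix.submatrix_apply, hs]
      rfl
    · rw [if_neg h1]
      by_cases hr : r < m₁ + m₂
      · have h2 : r - m₁ < m₂ := by omega
        rw [E, dif_pos ⟨hr, hy⟩, E, dif_pos ⟨h2, hy⟩]
        show vstack X Y ⟨r, hr⟩ ⟨y, hy⟩ = _
        unfold vstack
        have hs : (finSumFinEquiv.symm ⟨r, hr⟩ : Fin m₁ ⊕ Fin m₂) = Sum.inr ⟨r - m₁, h2⟩ := by
          rw [Equiv.symm_apply_eq, finSumFinEquiv_apply_right]
          apply Fin.ext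
          simp [Fin.natAdd]
          omega
        rw [Matrix.reindex_apply, Matrix.submatrix_apply, hs]
        rfl
      · rw [E, dif_neg (by omega), E, dif_neg (by omega)]
  · rw [E, dif_neg (by omega), E, dif_neg (by omega), E, dif_neg (by omega), ite_self]

end BP

namespace BP

lemma div_eq_iff' {t z b : ℕ} (ht : 0 < t) : z / t = b ↔ b * t ≤ z ∧ z < b * t + t := by
  constructor
  · intro h
    have h1 := Nat.div_add_mod z t
    have h2 := Nat.mod_lt z ht
    rw [h, mul_comm] at h1
    omega
  · rintro ⟨h1, h2⟩
    exact Nat.div_eq_of_lt_le h1 (by rw [Nat.succ_mul]; omega)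

lemma sum_indicator_div (t m b : ℕ) (ht : 0 < t) (hb : b < m) :
    ∑ z ∈ Finset.range (t * m), (if z / t = b then (1 : ℤ) else 0) = t := by
  have h1 : ∀ z, (if z / t = b then (1 : ℤ) else 0)
      = if z ∈ Finset.Ico (b * t) (b * t + t) then 1 else 0 := fun z =>
    if_congr ((div_eq_iff' ht).trans Finset.mem_Ico.symm) rfl rfl
  rw [Finset.sum_congr rfl fun z _ => h1 z, Finset.sum_ite_mem,
    Finset.inter_eq_right.mpr ?_]
  · rw [Finset.sum_const, Nat.card_Ico]
    simp
  · intro q hq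
    rw [Finset.mem_Ico] at hq
    rw [Finset.mem_range]
    calc q < b * t + t := hq.2
      _ = (b + 1) * t := by ring
      _ ≤ m * t := Nat.mul_le_mul_right _ (by omega)
      _ = t * m := mul_comm _ _

lemma count_block (t m c b : ℕ) (ht : 0 < t) (hb : b < 2 ^ m) :
    ∑ q ∈ Finset.Ico (c * (t * 2 ^ m)) (c * (t * 2 ^ m) + t * 2 ^ m),
      (if q / t % 2 ^ m = b then (1 : ℤ) else 0) = t := by
  rw [Finset.sum_Ico_eq_sum_range]
  have hd : c * (t * 2 ^ m) + t * 2 ^ m - c * (t * 2 ^ m) = t * 2 ^ m := by omega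
  rw [hd]
  rw [Finset.sum_congr rfl (fun z hz => ?_), sum_indicator_div t (2 ^ m) b ht hb]
  rw [Finset.mem_range] at hz
  have h1 : (c * (t * 2 ^ m) + z) / t = c * 2 ^ m + z / t := by
    rw [show c * (t * 2 ^ m) = t * (c * 2 ^ m) by ring, Nat.mul_add_div ht]
  have h2 : z / t < 2 ^ m := Nat.div_lt_of_lt_mul hz
  rw [h1, add_comm (c * 2 ^ m), Nat.add_mul_mod_self_right, Nat.mod_eq_of_lt h2]

lemma sum_range_if_Ico (N c1 c2 : ℕ) (h : c2 ≤ N) (f : ℕ → ℤ) :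
    ∑ q ∈ Finset.range N, (if c1 ≤ q ∧ q < c2 then f q else 0)
      = ∑ q ∈ Finset.Ico c1 c2, f q := by
  rw [Finset.sum_congr rfl fun q _ => if_congr Finset.mem_Ico.symm rfl rfl,
    Finset.sum_ite_mem, Finset.inter_eq_right.mpr ?_]
  intro q hq
  rw [Finset.mem_Ico] at hq
  exact Finset.mem_range.mpr (lt_of_lt_of_le hq.2 h)

lemma E_Pmat (t n : ℕ) {x y : ℕ} (hx : x < t * 4 ^ n) (hy : y < t * 4 ^ n) :
    E (Pmat t n) x y = if y / (t * 2 ^ n) = 2 ^ n - 1 - (x / t % 2 ^ n) then 1 else 0 := by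
  have ht : 0 < t := by
    rcases Nat.eq_zero_or_pos t with h | h
    · subst h; simp at hx
    · exact h
  have hp : (0 : ℕ) < 2 ^ n := Nat.pow_pos (by norm_num)
  unfold Pmat
  rw [E_castM]
  have hx' : x < 2 ^ n * 2 ^ n * t := by rw [four_pow_eq, mul_comm] at hx; exact hx
  have hy' : y < 1 * 2 ^ n * (t * 2 ^ n) := by
    rw [show 1 * 2 ^ n * (t * 2 ^ n) = t * 4 ^ n by rw [four_pow_eq]; ring]
    exact hy
  rw [E_kron _ _ hx' hy']
  have hx1 : x / t < 2 ^ n * 2 ^ n := Nat.div_lt_of_lt_mul (by rwa [mul_comm] at hx')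
  have hy1 : y / (t * 2 ^ n) < 1 * 2 ^ n := Nat.div_lt_of_lt_mul (by rwa [mul_comm] at hy')
  rw [E_kron _ _ hx1 hy1]
  set a := x / t % 2 ^ n with ha
  set e := y / (t * 2 ^ n) with he
  have ha2 : a < 2 ^ n := Nat.mod_lt _ hp
  have he2 : e < 2 ^ n := by omega
  have hxt : x % t < t := Nat.mod_lt _ ht
  have hyt : y % (t * 2 ^ n) < t * 2 ^ n := Nat.mod_lt _ (by positivity)
  have hxd : x / t / 2 ^ n < 2 ^ n := Nat.div_lt_of_lt_mul hx1
  have hed : e / 2 ^ n = 0 := Nat.div_eq_of_lt he2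
  have hem : e % 2 ^ n = e := Nat.mod_eq_of_lt he2
  rw [E_Jmat, E_Jmat, E_Kmat, hem, if_pos (show x / t / 2 ^ n < 2 ^ n ∧ e / 2 ^ n < 1 from ⟨hxd, by omega⟩),
    if_pos (show x % t < t ∧ y % (t * 2 ^ n) < t * 2 ^ n from ⟨hxt, hyt⟩)]
  split_ifs with h1 h2 h3
  · norm_num
  · exact absurd h1.2.2 h2
  · exact absurd ⟨ha2, he2, h3⟩ h1
  · norm_num

end BP

namespace BP

/-- The strengthened invariant. -/
def Tp (t m k : ℕ) {r : ℕ} (B : Matrix (Fin r) (Fin (t * 4 ^ m)) ℤ) : Prop :=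
  ∀ i b : ℕ, i < r → b < 2 ^ (m + k) →
    ∑ q ∈ Finset.range (2 ^ k * (t * 4 ^ m)),
      (if q / t % 2 ^ (m + k) = b then E B i (q / 2 ^ k) else 0) = t

lemma sum_two_ifs (t mk N c b : ℕ) (ht : 0 < t) (hb : b < 2 ^ mk)
    (hN : (c + 1) * (t * 2 ^ mk) ≤ N) :
    ∑ q ∈ Finset.range N,
      (if q / t % 2 ^ mk = b then (if q / (t * 2 ^ mk) = c then (1 : ℤ) else 0) else 0) = t := by
  have hD : 0 < t * 2 ^ mk := by positivity
  have h1 : ∀ q, (if q / t % 2 ^ mk = b then (if q / (t * 2 ^ mk) = c then (1 : ℤ) else 0) else 0)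
      = if c * (t * 2 ^ mk) ≤ q ∧ q < c * (t * 2 ^ mk) + t * 2 ^ mk then
          (if q / t % 2 ^ mk = b then (1 : ℤ) else 0) else 0 := by
    intro q
    calc (if q / t % 2 ^ mk = b then (if q / (t * 2 ^ mk) = c then (1 : ℤ) else 0) else 0)
        = if q / (t * 2 ^ mk) = c then (if q / t % 2 ^ mk = b then (1 : ℤ) else 0) else 0 := by
          split_ifs <;> rfl
      _ = _ := if_congr (div_eq_iff' hD) rfl rfl
  rw [Finset.sum_congr rfl fun q _ => h1 q,
    sum_range_if_Ico _ _ _ (by calc c * (t * 2 ^ mk) + t * 2 ^ mk = (c + 1) * (t * 2 ^ mk) := by ring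
      _ ≤ N := hN)]
  exact count_block t mk c b ht hb

lemma Tp_Pmat (t n k : ℕ) (ht : 0 < t) : Tp t n k (Pmat t n) := by
  intro j b hj hb
  have hp : (0 : ℕ) < 2 ^ n := Nat.pow_pos (by norm_num)
  set e := 2 ^ n - 1 - (j / t % 2 ^ n) with hedef
  have he : e < 2 ^ n := by omega
  rw [Finset.sum_congr rfl fun q hq => ?_]
  · exact sum_two_ifs t (n + k) _ e b ht hb
      (by calc (e + 1) * (t * 2 ^ (n + k)) ≤ 2 ^ n * (t * 2 ^ (n + k)) :=
            Nat.mul_le_mul_right _ (by omega)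
        _ = 2 ^ k * (t * 4 ^ n) := by rw [four_pow_eq, pow_add]; ring)
  · rw [Finset.mem_range] at hq
    have hq2 : q / 2 ^ k < t * 4 ^ n := Nat.div_lt_of_lt_mul hq
    rw [E_Pmat t n hj hq2, Nat.div_div_eq_div_mul,
      show 2 ^ k * (t * 2 ^ n) = t * 2 ^ (n + k) by rw [pow_add]; ring]


lemma E_Bmat_one (t v : ℕ) (B₁ : Matrix (Fin v) (Fin (4 * t)) ℤ) (i x : ℕ)
    (hi : i < v) (hx : x < 4 * t) :
    E (Bmat t v B₁ 1) i x = B₁ ⟨i, hi⟩ ⟨x, hx⟩ := by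
  show E (castM (vnum_one v t).symm (by ring) B₁) i x = _
  rw [E_castM, E, dif_pos ⟨hi, hx⟩]

lemma Tp_B1 (t v k : ℕ) (ht : 0 < t)
    (B₁ : Matrix (Fin v) (Fin (4 * t)) ℤ)
    (hblockB : ∀ i : Fin v, ∃! b : Fin 2, ∀ j : Fin (4 * t),
      B₁ i j = if (j : ℕ) / (2 * t) = (b : ℕ) then 1 else 0) :
    Tp t 1 k (Bmat t v B₁ 1) := by
  intro i b hi hb
  rw [vnum_one] at hi
  obtain ⟨a, ha, -⟩ := hblockB ⟨i, hi⟩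
  have ha2 : (a : ℕ) < 2 := a.isLt
  rw [Finset.sum_congr rfl fun q hq => ?_]
  · exact sum_two_ifs t (1 + k) _ a b ht hb
      (by calc ((a : ℕ) + 1) * (t * 2 ^ (1 + k)) ≤ 2 * (t * 2 ^ (1 + k)) :=
            Nat.mul_le_mul_right _ (by omega)
        _ = 2 ^ k * (t * 4 ^ 1) := by rw [pow_add]; ring)
  · rw [Finset.mem_range] at hq
    have hq2 : q / 2 ^ k < t * 4 ^ 1 := Nat.div_lt_of_lt_mul hq
    have hq3 : q / 2 ^ k < 4 * t := by omega
    rw [E_Bmat_one t v B₁ i _ hi hq3, ha ⟨q / 2 ^ k, hq3⟩]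
    have hdd : (q / 2 ^ k) / (2 * t) = q / (t * 2 ^ (1 + k)) := by
      rw [Nat.div_div_eq_div_mul, show 2 ^ k * (2 * t) = t * 2 ^ (1 + k) by rw [pow_add]; ring]
    rw [show ((⟨q / 2 ^ k, hq3⟩ : Fin (4 * t)) : ℕ) = q / 2 ^ k from rfl, hdd]

end BP

namespace BP

lemma slice (t n k : ℕ) (ht : 0 < t) {m : ℕ} (B' : Matrix (Fin m) (Fin (t * 4 ^ (n + 1))) ℤ)
    (hB : Tp t (n + 1) (k + 1) B') (i s b : ℕ) (hi : i < m) (hs : s < 2)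
    (hb : b < 2 ^ (n + 2 + k)) :
    ∑ q ∈ Finset.range (2 ^ k * (t * 4 ^ (n + 2))),
      (if q / t % 2 ^ (n + 2 + k) = b then
        (if q / (2 ^ (k + 1) * (t * 4 ^ (n + 1))) = s then (1 : ℤ) else 0)
          * E B' i (q / 2 ^ (k + 1) % (t * 4 ^ (n + 1))) else 0) = t := by
  have hp : (0 : ℕ) < 2 ^ (k + 1) := Nat.pow_pos (by norm_num)
  have hexp : n + 1 + (k + 1) = n + 2 + k := by omega
  have hB2 := hB i b hi (by rw [hexp]; exact hb)
  rw [hexp] at hB2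
  have hsplit : 2 ^ k * (t * 4 ^ (n + 2))
      = 2 ^ (k + 1) * (t * 4 ^ (n + 1)) + 2 ^ (k + 1) * (t * 4 ^ (n + 1)) := by
    rw [pow_succ 4 (n + 1), pow_succ 2 k]; ring
  have hEt : 2 ^ (k + 1) * (t * 4 ^ (n + 1)) = t * (2 ^ (n + 2 + k) * 2 ^ (n + 1)) := by
    rw [four_pow_eq, show n + 2 + k = n + 1 + (k + 1) by omega, pow_add]; ring
  rw [hsplit, Finset.range_eq_Ico,
    ← Finset.sum_Ico_consecutive _ (Nat.zero_le (2 ^ (k + 1) * (t * 4 ^ (n + 1)))) (by omega),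
    ← Finset.range_eq_Ico]
  interval_cases s
  · have h1 : ∑ q ∈ Finset.range (2 ^ (k + 1) * (t * 4 ^ (n + 1))),
        (if q / t % 2 ^ (n + 2 + k) = b then
          (if q / (2 ^ (k + 1) * (t * 4 ^ (n + 1))) = 0 then (1 : ℤ) else 0)
            * E B' i (q / 2 ^ (k + 1) % (t * 4 ^ (n + 1))) else 0)
        = ∑ q ∈ Finset.range (2 ^ (k + 1) * (t * 4 ^ (n + 1))),
            (if q / t % 2 ^ (n + 2 + k) = b then E B' i (q / 2 ^ (k + 1)) else 0) :=
      Finset.sum_congr rfl fun q hq => by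
        rw [Finset.mem_range] at hq
        have dlt : q / 2 ^ (k + 1) < t * 4 ^ (n + 1) := Nat.div_lt_of_lt_mul hq
        rw [Nat.div_eq_of_lt hq, if_pos rfl, one_mul, Nat.mod_eq_of_lt dlt]
    have h2 : ∑ q ∈ Finset.Ico (2 ^ (k + 1) * (t * 4 ^ (n + 1)))
          (2 ^ (k + 1) * (t * 4 ^ (n + 1)) + 2 ^ (k + 1) * (t * 4 ^ (n + 1))),
        (if q / t % 2 ^ (n + 2 + k) = b then
          (if q / (2 ^ (k + 1) * (t * 4 ^ (n + 1))) = 0 then (1 : ℤ) else 0)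
            * E B' i (q / 2 ^ (k + 1) % (t * 4 ^ (n + 1))) else 0) = 0 :=
      Finset.sum_eq_zero fun q hq => by
        rw [Finset.mem_Ico] at hq
        have d1 : q / (2 ^ (k + 1) * (t * 4 ^ (n + 1))) = 1 :=
          Nat.div_eq_of_lt_le (by omega) (by omega)
        rw [d1, if_neg one_ne_zero, zero_mul, ite_self]
    rw [h1, h2, add_zero]
    exact hB2
  · have h1 : ∑ q ∈ Finset.range (2 ^ (k + 1) * (t * 4 ^ (n + 1))),
        (if q / t % 2 ^ (n + 2 + k) = b then
          (if q / (2 ^ (k + 1) * (t * 4 ^ (n + 1))) = 1 then (1 : ℤ) else 0)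
            * E B' i (q / 2 ^ (k + 1) % (t * 4 ^ (n + 1))) else 0) = 0 :=
      Finset.sum_eq_zero fun q hq => by
        rw [Finset.mem_range] at hq
        rw [Nat.div_eq_of_lt hq, if_neg zero_ne_one, zero_mul, ite_self]
    have hlen : 2 ^ (k + 1) * (t * 4 ^ (n + 1)) + 2 ^ (k + 1) * (t * 4 ^ (n + 1))
        - 2 ^ (k + 1) * (t * 4 ^ (n + 1)) = 2 ^ (k + 1) * (t * 4 ^ (n + 1)) := by omega
    have h2 : ∑ q ∈ Finset.Ico (2 ^ (k + 1) * (t * 4 ^ (n + 1)))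
          (2 ^ (k + 1) * (t * 4 ^ (n + 1)) + 2 ^ (k + 1) * (t * 4 ^ (n + 1))),
        (if q / t % 2 ^ (n + 2 + k) = b then
          (if q / (2 ^ (k + 1) * (t * 4 ^ (n + 1))) = 1 then (1 : ℤ) else 0)
            * E B' i (q / 2 ^ (k + 1) % (t * 4 ^ (n + 1))) else 0)
        = ∑ z ∈ Finset.range (2 ^ (k + 1) * (t * 4 ^ (n + 1))),
            (if z / t % 2 ^ (n + 2 + k) = b then E B' i (z / 2 ^ (k + 1)) else 0) := by
      rw [Finset.sum_Ico_eq_sum_range, hlen]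
      refine Finset.sum_congr rfl fun z hz => ?_
      rw [Finset.mem_range] at hz
      have d1 : (2 ^ (k + 1) * (t * 4 ^ (n + 1)) + z) / (2 ^ (k + 1) * (t * 4 ^ (n + 1))) = 1 :=
        Nat.div_eq_of_lt_le (by omega) (by omega)
      have d2 : (2 ^ (k + 1) * (t * 4 ^ (n + 1)) + z) / t % 2 ^ (n + 2 + k)
          = z / t % 2 ^ (n + 2 + k) := by
        rw [hEt, Nat.mul_add_div ht, Nat.mul_add_mod]
      have d3 : (2 ^ (k + 1) * (t * 4 ^ (n + 1)) + z) / 2 ^ (k + 1) % (t * 4 ^ (n + 1))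
          = z / 2 ^ (k + 1) := by
        rw [Nat.mul_add_div hp, Nat.add_mod_left,
          Nat.mod_eq_of_lt (Nat.div_lt_of_lt_mul hz)]
      rw [d1, if_pos rfl, one_mul, d2, d3]
    rw [h1, h2, zero_add]
    exact hB2

end BP

namespace BP

lemma vnum_pos (v t n : ℕ) (hv : 0 < v) : 0 < vnum v t n := by
  unfold vnum
  exact Nat.mul_pos (by omega) (Nat.pow_pos (by norm_num))

lemma Bmat_def2 (t v : ℕ) (B₁ : Matrix (Fin v) (Fin (4 * t)) ℤ) (n : ℕ) :
    Bmat t v B₁ (n + 2) = castM (by rw [vnum_succ]; try ring) (by ring)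
      (vstack (kron (kron (Kmat 2) (Bmat t v B₁ (n + 1))) (Jmat 1 2))
        (kron (kron (1 : Matrix (Fin 2) (Fin 2) ℤ) (Pmat t (n + 1))) (Jmat 1 2))) := rfl

lemma Tp_step (t v n k : ℕ) (ht : 0 < t) (hv : 0 < v)
    (B₁ : Matrix (Fin v) (Fin (4 * t)) ℤ)
    (hB : Tp t (n + 1) (k + 1) (Bmat t v B₁ (n + 1))) :
    Tp t (n + 2) k (Bmat t v B₁ (n + 2)) := by
  intro r b hr hb
  have hv' : 0 < vnum v t (n + 1) := vnum_pos v t (n + 1) hv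
  have hN0 : 0 < t * 4 ^ (n + 1) := by positivity
  have hvs : vnum v t (n + 2) = 2 * vnum v t (n + 1) * 1 + 2 * (t * 4 ^ (n + 1)) * 1 := by
    rw [vnum_succ]; ring
  have hx42 : 2 * (t * 4 ^ (n + 1)) * 2 = t * 4 ^ (n + 2) := by rw [pow_succ]; ring
  have hEform : ∀ x, x < t * 4 ^ (n + 2) →
      E (Bmat t v B₁ (n + 2)) r x =
        if r < 2 * vnum v t (n + 1) then
          (if x / 2 / (t * 4 ^ (n + 1)) = 2 - 1 - r / vnum v t (n + 1) then (1 : ℤ) else 0)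
            * E (Bmat t v B₁ (n + 1)) (r % vnum v t (n + 1)) (x / 2 % (t * 4 ^ (n + 1)))
        else
          (if x / 2 / (t * 4 ^ (n + 1)) = (r - 2 * vnum v t (n + 1)) / (t * 4 ^ (n + 1))
              then (1 : ℤ) else 0)
            * E (Pmat t (n + 1)) ((r - 2 * vnum v t (n + 1)) % (t * 4 ^ (n + 1)))
                (x / 2 % (t * 4 ^ (n + 1))) := by
    intro x hx
    have hx' : x < 2 * (t * 4 ^ (n + 1)) * 2 := by omega
    have hx2 : x / 2 < 2 * (t * 4 ^ (n + 1)) := Nat.div_lt_of_lt_mul (by omega)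
    have hx2' : x / 2 / (t * 4 ^ (n + 1)) < 2 := Nat.div_lt_of_lt_mul (by omega)
    have hx2m : x / 2 % (t * 4 ^ (n + 1)) < t * 4 ^ (n + 1) := Nat.mod_lt _ hN0
    have hxm2 : x % 2 < 2 := Nat.mod_lt _ (by norm_num)
    rw [Bmat_def2, E_castM, E_vstack]
    by_cases hcase : r < 2 * vnum v t (n + 1)
    · rw [if_pos (by omega : r < 2 * vnum v t (n + 1) * 1), if_pos hcase]
      have hr1 : r < 2 * vnum v t (n + 1) * 1 := by omega
      rw [E_kron _ _ hr1 (by omega : x < 2 * (t * 4 ^ (n + 1)) * 2), Nat.div_one, Nat.mod_one]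
      rw [E_kron _ _ (by omega : r < 2 * vnum v t (n + 1)) hx2]
      rw [E_Jmat, if_pos ⟨Nat.zero_lt_one, hxm2⟩, mul_one, E_Kmat]
      have ha : r / vnum v t (n + 1) < 2 := Nat.div_lt_of_lt_mul (by omega)
      congr 1
      exact if_congr ⟨fun h => h.2.2, fun h => ⟨ha, hx2', h⟩⟩ rfl rfl
    · rw [if_neg (by omega : ¬ r < 2 * vnum v t (n + 1) * 1), if_neg hcase]
      have hr2 : r - 2 * vnum v t (n + 1) * 1 < 2 * (t * 4 ^ (n + 1)) * 1 := by omega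
      rw [E_kron _ _ hr2 (by omega : x < 2 * (t * 4 ^ (n + 1)) * 2), Nat.div_one, Nat.mod_one]
      rw [E_kron _ _ (by omega : r - 2 * vnum v t (n + 1) * 1 < 2 * (t * 4 ^ (n + 1)))
        hx2]
      rw [E_Jmat, if_pos ⟨Nat.zero_lt_one, hxm2⟩, mul_one, E_one2,
        show r - 2 * vnum v t (n + 1) * 1 = r - 2 * vnum v t (n + 1) by omega]
      have ha : (r - 2 * vnum v t (n + 1)) / (t * 4 ^ (n + 1)) < 2 :=
        Nat.div_lt_of_lt_mul (by omega)
      congr 1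
      exact if_congr ⟨fun h => h.2.2.symm, fun h => ⟨ha, hx2', h.symm⟩⟩ rfl rfl
  by_cases hcase : r < 2 * vnum v t (n + 1)
  · have hi2 : r % vnum v t (n + 1) < vnum v t (n + 1) := Nat.mod_lt _ hv'
    have hs2 : 2 - 1 - r / vnum v t (n + 1) < 2 :=
      Nat.lt_of_le_of_lt (Nat.sub_le _ _) (by norm_num)
    have hsum : ∑ q ∈ Finset.range (2 ^ k * (t * 4 ^ (n + 2))),
        (if q / t % 2 ^ (n + 2 + k) = b then E (Bmat t v B₁ (n + 2)) r (q / 2 ^ k) else 0)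
        = ∑ q ∈ Finset.range (2 ^ k * (t * 4 ^ (n + 2))),
            (if q / t % 2 ^ (n + 2 + k) = b then
              (if q / (2 ^ (k + 1) * (t * 4 ^ (n + 1))) = 2 - 1 - r / vnum v t (n + 1)
                then (1 : ℤ) else 0)
                * E (Bmat t v B₁ (n + 1)) (r % vnum v t (n + 1))
                    (q / 2 ^ (k + 1) % (t * 4 ^ (n + 1))) else 0) := by
      refine Finset.sum_congr rfl fun q hq => ?_
      rw [Finset.mem_range] at hq
      have hxq : q / 2 ^ k < t * 4 ^ (n + 2) := Nat.div_lt_of_lt_mul hq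
      have e1 : q / 2 ^ k / 2 = q / 2 ^ (k + 1) := by
        rw [Nat.div_div_eq_div_mul, pow_succ]
      have e2 : q / 2 ^ (k + 1) / (t * 4 ^ (n + 1)) = q / (2 ^ (k + 1) * (t * 4 ^ (n + 1))) :=
        Nat.div_div_eq_div_mul _ _ _
      rw [hEform _ hxq, if_pos hcase]
      simp only [e1, e2]
    rw [hsum]
    have := slice t n k ht (Bmat t v B₁ (n + 1)) hB (r % vnum v t (n + 1))
      (2 - 1 - r / vnum v t (n + 1)) b hi2 hs2 hb
    exact this
  · have hr' : r - 2 * vnum v t (n + 1) < 2 * (t * 4 ^ (n + 1)) := by omega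
    have hi2 : (r - 2 * vnum v t (n + 1)) % (t * 4 ^ (n + 1)) < t * 4 ^ (n + 1) :=
      Nat.mod_lt _ hN0
    have hs2 : (r - 2 * vnum v t (n + 1)) / (t * 4 ^ (n + 1)) < 2 :=
      Nat.div_lt_of_lt_mul (by omega)
    have hsum : ∑ q ∈ Finset.range (2 ^ k * (t * 4 ^ (n + 2))),
        (if q / t % 2 ^ (n + 2 + k) = b then E (Bmat t v B₁ (n + 2)) r (q / 2 ^ k) else 0)
        = ∑ q ∈ Finset.range (2 ^ k * (t * 4 ^ (n + 2))),
            (if q / t % 2 ^ (n + 2 + k) = b then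
              (if q / (2 ^ (k + 1) * (t * 4 ^ (n + 1)))
                  = (r - 2 * vnum v t (n + 1)) / (t * 4 ^ (n + 1)) then (1 : ℤ) else 0)
                * E (Pmat t (n + 1)) ((r - 2 * vnum v t (n + 1)) % (t * 4 ^ (n + 1)))
                    (q / 2 ^ (k + 1) % (t * 4 ^ (n + 1))) else 0) := by
      refine Finset.sum_congr rfl fun q hq => ?_
      rw [Finset.mem_range] at hq
      have hxq : q / 2 ^ k < t * 4 ^ (n + 2) := Nat.div_lt_of_lt_mul hq
      have e1 : q / 2 ^ k / 2 = q / 2 ^ (k + 1) := by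
        rw [Nat.div_div_eq_div_mul, pow_succ]
      have e2 : q / 2 ^ (k + 1) / (t * 4 ^ (n + 1)) = q / (2 ^ (k + 1) * (t * 4 ^ (n + 1))) :=
        Nat.div_div_eq_div_mul _ _ _
      rw [hEform _ hxq, if_neg hcase]
      simp only [e1, e2]
    rw [hsum]
    have := slice t n k ht (Pmat t (n + 1)) (Tp_Pmat t (n + 1) (k + 1) ht)
      ((r - 2 * vnum v t (n + 1)) % (t * 4 ^ (n + 1)))
      ((r - 2 * vnum v t (n + 1)) / (t * 4 ^ (n + 1))) b hi2 hs2 hb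
    exact this

lemma Tp_all (t v : ℕ) (ht : 0 < t) (hv : 0 < v)
    (B₁ : Matrix (Fin v) (Fin (4 * t)) ℤ)
    (hblockB : ∀ i : Fin v, ∃! b : Fin 2, ∀ j : Fin (4 * t),
      B₁ i j = if (j : ℕ) / (2 * t) = (b : ℕ) then 1 else 0) :
    ∀ n k : ℕ, Tp t (n + 1) k (Bmat t v B₁ (n + 1)) := by
  intro n
  induction n with
  | zero => exact fun k => Tp_B1 t v k ht B₁ hblockB
  | succ n ih => exact fun k => Tp_step t v n k ht hv B₁ (ih (k + 1))

end BP

/-- Equation (13): `B_n · P_n = t · J_{v_n, t·4^n}` where `v_n = (v+(2^{n+1}−4)t)·2^{n−1}`. -/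
theorem Bmat_mul_Pmat
    (t v k : ℕ) (ht : 0 < t) (hv : 0 < v) (hk : 0 < k)
    (B₁ : Matrix (Fin v) (Fin (4 * t)) ℤ)
    (hB01 : ∀ i j, B₁ i j = 0 ∨ B₁ i j = 1)
    (hblockB : ∀ i : Fin v, ∃! b : Fin 2, ∀ j : Fin (4 * t),
      B₁ i j = if (j : ℕ) / (2 * t) = (b : ℕ) then 1 else 0)
    (n : ℕ) (hn : 1 ≤ n) :
    Bmat t v B₁ n * Pmat t n = (t : ℤ) • Jmat (vnum v t n) (t * 4 ^ n) := by
  obtain ⟨n, rfl⟩ : ∃ m, m + 1 = n := ⟨n - 1, by omega⟩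
  have hT := BP.Tp_all t v ht hv B₁ hblockB n 0
  simp only [BP.Tp, pow_zero, one_mul, Nat.div_one, Nat.add_zero] at hT
  ext i y
  have hp : (0 : ℕ) < 2 ^ (n + 1) := Nat.pow_pos (by norm_num)
  have hy : (y : ℕ) < t * 4 ^ (n + 1) := y.isLt
  have hy' : (y : ℕ) < t * 2 ^ (n + 1) * 2 ^ (n + 1) := by
    rw [show t * 2 ^ (n + 1) * 2 ^ (n + 1) = t * 4 ^ (n + 1) by rw [four_pow_eq]; ring]
    exact hy
  obtain ⟨ed, hed⟩ : ∃ ed, (y : ℕ) / (t * 2 ^ (n + 1)) = ed := ⟨_, rfl⟩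
  have he : ed < 2 ^ (n + 1) := hed ▸ Nat.div_lt_of_lt_mul hy'
  have hb : 2 ^ (n + 1) - 1 - ed < 2 ^ (n + 1) := by omega
  have hT2 := hT (i : ℕ) (2 ^ (n + 1) - 1 - ed) i.isLt hb
  rw [Matrix.mul_apply]
  have hstep : ∑ x : Fin (t * 4 ^ (n + 1)), Bmat t v B₁ (n + 1) i x * Pmat t (n + 1) x y
      = ∑ q ∈ Finset.range (t * 4 ^ (n + 1)),
          (if q / t % 2 ^ (n + 1) = 2 ^ (n + 1) - 1 - ed then
            BP.E (Bmat t v B₁ (n + 1)) (i : ℕ) q else 0) := by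
    rw [← Fin.sum_univ_eq_sum_range (fun q =>
      (if q / t % 2 ^ (n + 1) = 2 ^ (n + 1) - 1 - ed then
        BP.E (Bmat t v B₁ (n + 1)) (i : ℕ) q else 0)) (t * 4 ^ (n + 1))]
    refine Finset.sum_congr rfl fun x _ => ?_
    have hx : (x : ℕ) < t * 4 ^ (n + 1) := x.isLt
    obtain ⟨a, ha⟩ : ∃ a, (x : ℕ) / t % 2 ^ (n + 1) = a := ⟨_, rfl⟩
    have ha2 : a < 2 ^ (n + 1) := ha ▸ Nat.mod_lt _ hp
    rw [← BP.E_apply (Bmat t v B₁ (n + 1)) i x, ← BP.E_apply (Pmat t (n + 1)) x y,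
      BP.E_Pmat t (n + 1) hx hy, mul_ite, mul_one, mul_zero, hed, ha]
    exact if_congr (by constructor <;> intro h <;> omega) rfl rfl
  rw [hstep, hT2]
  simp [Jmat, Matrix.smul_apply]
end
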